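/- Let C = ⟨g_1(x), g_2(x)⟩ be the cyclic code of length n = p^k over R = F[u]/⟨u⁴⟩ generated by g_1(x) = u(x−1)^{r_1} + u²(x−1)^{k_4}p_4(x) + u³(x−1)^{k_5}p_5(x) and g_2(x) = u²(x−1)^{r_2} + u³(x−1)^{k_6}p_6(x), where 0 ≤ r_2 ≤ r_1 < n, k_4 < r_2, k_5 < r_2, k_6 < r_2, and p_4, p_5, p_6 are units of F[x]/⟨xⁿ − 1⟩. Then the five elements u³(x−1)^{r_1}, u³(x−1)^{n−r_1+k_4}, u³(x−1)^{r_2}, u³(x−1)^{n−k_4+k_5}, u³(x−1)^{n−r_2+k_6} all belong to C; consequently the third torsional degree of C satisfies t_3 ≤ min{r_2, n−r_1+k_4, n−k_4+k_5, n−r_2+k_6}. -/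

import Mathlib

open Polynomial
open scoped Classical

noncomputable section

/-- The ring `R = F[u]/⟨u⁴⟩`. -/
abbrev Rq (F : Type) [Field F] : Type :=
  Polynomial F ⧸ Ideal.span ({X ^ 4} : Set (Polynomial F))

/-- The ring `S = R[x]/⟨xⁿ − 1⟩`. -/
abbrev Sq (F : Type) [Field F] (n : ℕ) : Type :=
  Polynomial (Rq F) ⧸ Ideal.span ({X ^ n - 1} : Set (Polynomial (Rq F)))

/-- Port helper: the ideal `⟨xⁿ − 1⟩` of the commutative ring `R[x]` is two-sided. -/
instance instTwoSidedSq (F : Type) [Field F] (n : ℕ) :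
    (Ideal.span ({X ^ n - 1} : Set (Polynomial (Rq F)))).IsTwoSided :=
  ⟨fun b ha => mul_comm b _ ▸ Ideal.mul_mem_left _ b ha⟩

/-- The ring `Q = F[x]/⟨xⁿ − 1⟩`. -/
abbrev Qq (F : Type) [Field F] (n : ℕ) : Type :=
  Polynomial F ⧸ Ideal.span ({X ^ n - 1} : Set (Polynomial F))

/-- The element `u` of `R`. -/
def uu (F : Type) [Field F] : Rq F := Ideal.Quotient.mk _ X

/-- The element `u` of `S`. -/
def uS (F : Type) [Field F] (n : ℕ) : Sq F n := Ideal.Quotient.mk _ (C (uu F))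

/-- The element `x` of `S`. -/
def xS (F : Type) [Field F] (n : ℕ) : Sq F n := Ideal.Quotient.mk _ X

/-- The element `x` of `Q`. -/
def xQ (F : Type) [Field F] (n : ℕ) : Qq F n := Ideal.Quotient.mk _ X

/-- Reduction `R → F` modulo `u`. -/
def resHom (F : Type) [Field F] : Rq F →+* F :=
  Ideal.Quotient.lift _ (evalRingHom 0) (by
    intro a ha
    rw [Ideal.mem_span_singleton] at ha
    obtain ⟨c, rfl⟩ := ha
    simp)

/-- Reduction `μ : S → Q` modulo `u`. -/
def muHom (F : Type) [Field F] (n : ℕ) : Sq F n →+* Qq F n :=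
  Ideal.Quotient.lift _ ((Ideal.Quotient.mk _).comp (mapRingHom (resHom F))) (by
    intro a ha
    rw [Ideal.mem_span_singleton'] at ha
    obtain ⟨c, rfl⟩ := ha
    rw [RingHom.comp_apply, map_mul, Ideal.Quotient.eq_zero_iff_mem]
    apply Ideal.mul_mem_left
    have h : (mapRingHom (resHom F)) (X ^ n - 1 : Polynomial (Rq F))
        = (X ^ n - 1 : Polynomial F) := by simp
    rw [h]
    exact Ideal.subset_span rfl)

/-- The natural lift `Q → S` (sending `a ∈ F` to itself and `x ↦ x`). -/
def liftQS (F : Type) [Field F] (n : ℕ) : Qq F n →+* Sq F n :=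
  Ideal.Quotient.lift _
    ((Ideal.Quotient.mk _).comp
      (mapRingHom ((Ideal.Quotient.mk _).comp (C : F →+* Polynomial F)))) (by
    intro a ha
    rw [Ideal.mem_span_singleton] at ha
    obtain ⟨c, rfl⟩ := ha
    rw [RingHom.comp_apply, map_mul, Ideal.Quotient.eq_zero_iff_mem]
    apply Ideal.mul_mem_right
    have h : (mapRingHom ((Ideal.Quotient.mk (Ideal.span ({X ^ 4} : Set (Polynomial F)))).comp
        (C : F →+* Polynomial F))) (X ^ n - 1 : Polynomial F)
        = (X ^ n - 1 : Polynomial (Rq F)) := by simp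
    rw [h]
    exact Ideal.subset_span rfl)

/-- The `i`-th torsion code `Tor_i(C) = {μ(g) : uⁱ·g ∈ C}`, as a subset of `Q`. -/
def TorSet (F : Type) [Field F] (n : ℕ) (i : ℕ) (Cc : Ideal (Sq F n)) : Set (Qq F n) :=
  { a | ∃ g : Sq F n, (uS F n) ^ i * g ∈ Cc ∧ muHom F n g = a }

/-- The code `C` has `i`-th torsional degree `t`, i.e. `Tor_i(C) = ⟨(x−1)^t⟩` with `0 ≤ t ≤ n`. -/
def HasTorDeg (F : Type) [Field F] (n : ℕ) (i : ℕ) (Cc : Ideal (Sq F n)) (t : ℕ) : Prop :=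
  t ≤ n ∧ TorSet F n i Cc = ↑(Ideal.span {(xQ F n - 1) ^ t})

/-- An element of `S` that is the lift of a unit of `Q = F[x]/⟨xⁿ−1⟩`. -/
def IsUnitLift (F : Type) [Field F] (n : ℕ) (a : Sq F n) : Prop :=
  ∃ q : Qq F n, IsUnit q ∧ a = liftQS F n q

/-- An element of `S` that is zero or the lift of a unit of `Q = F[x]/⟨xⁿ−1⟩`. -/
def UnitOrZeroLift (F : Type) [Field F] (n : ℕ) (a : Sq F n) : Prop :=
  a = 0 ∨ IsUnitLift F n a

section MyAux

lemma my_uS_pow_four (F : Type) [Field F] (n : ℕ) : (uS F n) ^ 4 = 0 := by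
  have h : (uu F) ^ 4 = 0 := by
    rw [uu, ← map_pow, Ideal.Quotient.eq_zero_iff_mem]
    exact Ideal.subset_span rfl
  rw [uS, ← map_pow, ← C_pow, h, map_zero, map_zero]

lemma my_nontrivial_Rq (F : Type) [Field F] : Nontrivial (Rq F) := by
  refine Ideal.Quotient.nontrivial_iff.mpr ?_
  refine Ideal.span_singleton_ne_top ?_
  refine Polynomial.not_isUnit_of_natDegree_pos _ ?_
  simp [natDegree_X_pow]

lemma my_charF (F : Type) [Field F] [Fintype F] (p m : ℕ) (hp : p.Prime) (hm : 1 ≤ m)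
    (hF : Fintype.card F = p ^ m) : CharP F p := by
  haveI : Fact p.Prime := ⟨hp⟩
  have hq : (ringChar F).Prime := CharP.char_is_prime F (ringChar F)
  have hdvd : p ∣ ringChar F := (prime_dvd_char_iff_dvd_card p).mpr
    (by rw [hF]; exact dvd_pow_self p (by omega))
  have hpq : p = ringChar F := (Nat.prime_dvd_prime_iff_eq hp hq).mp hdvd
  exact hpq ▸ ringChar.charP F

lemma my_charRq (F : Type) [Field F] (p : ℕ) (hp : p.Prime) [CharP F p] : CharP (Rq F) p := by
  haveI : Nontrivial (Rq F) := my_nontrivial_Rq F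
  refine (CharP.charP_iff_prime_eq_zero hp).mpr ?_
  rw [← map_natCast (Ideal.Quotient.mk (Ideal.span ({X ^ 4} : Set (Polynomial F)))) p,
    CharP.cast_eq_zero (Polynomial F) p, map_zero]

lemma my_z_pow (F : Type) [Field F] (p k : ℕ) (hp : p.Prime) [CharP F p] :
    (xS F (p ^ k) - 1) ^ (p ^ k) = 0 := by
  haveI : Fact p.Prime := ⟨hp⟩
  haveI := my_charRq F p hp
  have h : ((X : Polynomial (Rq F)) - 1) ^ p ^ k = X ^ p ^ k - 1 := by
    rw [sub_pow_char_pow_of_commute _ _ (Commute.one_right _), one_pow]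
  have hx1 : xS F (p ^ k) - 1
      = Ideal.Quotient.mk (Ideal.span ({X ^ p ^ k - 1} : Set (Polynomial (Rq F))))
        ((X : Polynomial (Rq F)) - 1) := by
    rw [map_sub, map_one, xS]
  rw [hx1, ← map_pow, h, Ideal.Quotient.eq_zero_iff_mem]
  exact Ideal.subset_span rfl

lemma my_mu_x (F : Type) [Field F] (n : ℕ) : muHom F n (xS F n) = xQ F n := by
  rw [muHom, xS, xQ, Ideal.Quotient.lift_mk]
  simp

lemma my_mems {S : Type*} [CommRing S] (u z p₄ p₅ p₆ v₄ v₅ v₆ : S)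
    (n r₁ r₂ k₄ k₅ k₆ : ℕ) (hr₂₁ : r₂ ≤ r₁) (hr₁ : r₁ < n)
    (hk₄ : k₄ < r₂) (hk₅ : k₅ < r₂) (hk₆ : k₆ < r₂)
    (hu4 : u ^ 4 = 0) (hzn : z ^ n = 0)
    (hv₄ : v₄ * p₄ = 1) (hv₅ : v₅ * p₅ = 1) (hv₆ : v₆ * p₆ = 1)
    (C : Ideal S)
    (hC : C = Ideal.span {u * z ^ r₁ + u ^ 2 * z ^ k₄ * p₄ + u ^ 3 * z ^ k₅ * p₅,
      u ^ 2 * z ^ r₂ + u ^ 3 * z ^ k₆ * p₆}) :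
    u ^ 3 * z ^ r₁ ∈ C ∧ u ^ 3 * z ^ (n - r₁ + k₄) ∈ C ∧ u ^ 3 * z ^ r₂ ∈ C ∧
    u ^ 3 * z ^ (n - k₄ + k₅) ∈ C ∧ u ^ 3 * z ^ (n - r₂ + k₆) ∈ C := by
  have hg₁ : u * z ^ r₁ + u ^ 2 * z ^ k₄ * p₄ + u ^ 3 * z ^ k₅ * p₅ ∈ C := by
    rw [hC]; exact Ideal.subset_span (Set.mem_insert _ _)
  have hg₂ : u ^ 2 * z ^ r₂ + u ^ 3 * z ^ k₆ * p₆ ∈ C := by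
    rw [hC]; exact Ideal.subset_span (Set.mem_insert_of_mem _ rfl)
  have hzmul : ∀ a b : ℕ, n ≤ a + b → z ^ a * z ^ b = 0 := by
    intro a b hab
    rw [← pow_add]
    have h : a + b = n + (a + b - n) := by omega
    rw [h, pow_add, hzn, zero_mul]
  refine ⟨?_, ?_, ?_, ?_, ?_⟩
  · have he : u ^ 3 * z ^ r₁
        = u ^ 2 * (u * z ^ r₁ + u ^ 2 * z ^ k₄ * p₄ + u ^ 3 * z ^ k₅ * p₅) := by
      linear_combination (-(z ^ k₄ * p₄) - u * z ^ k₅ * p₅) * hu4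
    rw [he]; exact Ideal.mul_mem_left C _ hg₁
  · have h1 : z ^ (n - r₁) * z ^ r₁ = 0 := hzmul _ _ (by omega)
    have he : u ^ 3 * z ^ (n - r₁ + k₄)
        = (v₄ * (u * z ^ (n - r₁)))
          * (u * z ^ r₁ + u ^ 2 * z ^ k₄ * p₄ + u ^ 3 * z ^ k₅ * p₅) := by
      linear_combination (-(u ^ 3 * z ^ (n - r₁ + k₄))) * hv₄ - v₄ * u ^ 2 * h1
        - v₄ * z ^ (n - r₁) * z ^ k₅ * p₅ * hu4
    rw [he]; exact Ideal.mul_mem_left C _ hg₁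
  · have he : u ^ 3 * z ^ r₂ = u * (u ^ 2 * z ^ r₂ + u ^ 3 * z ^ k₆ * p₆) := by
      linear_combination (-(z ^ k₆ * p₆)) * hu4
    rw [he]; exact Ideal.mul_mem_left C _ hg₂
  · have h1 : z ^ (n - k₄) * z ^ r₁ = 0 := hzmul _ _ (by omega)
    have h2 : z ^ (n - k₄) * z ^ k₄ = 0 := hzmul _ _ (by omega)
    have he : u ^ 3 * z ^ (n - k₄ + k₅)
        = (v₅ * z ^ (n - k₄))
          * (u * z ^ r₁ + u ^ 2 * z ^ k₄ * p₄ + u ^ 3 * z ^ k₅ * p₅) := by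
      linear_combination (-(v₅ * u)) * h1 + (-(v₅ * u ^ 2 * p₄)) * h2
        + (-(u ^ 3 * z ^ (n - k₄ + k₅))) * hv₅
    rw [he]; exact Ideal.mul_mem_left C _ hg₁
  · have h1 : z ^ (n - r₂) * z ^ r₂ = 0 := hzmul _ _ (by omega)
    have he : u ^ 3 * z ^ (n - r₂ + k₆)
        = (v₆ * z ^ (n - r₂)) * (u ^ 2 * z ^ r₂ + u ^ 3 * z ^ k₆ * p₆) := by
      linear_combination (-(v₆ * u ^ 2)) * h1 + (-(u ^ 3 * z ^ (n - r₂ + k₆))) * hv₆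
    rw [he]; exact Ideal.mul_mem_left C _ hg₂

lemma my_key (F : Type) [Field F] (p k : ℕ) (hp : p.Prime) [CharP F p]
    (s t : ℕ) (ht : t ≤ p ^ k)
    (h : ((xQ F (p ^ k) - 1) ^ s : Qq F (p ^ k)) ∈ Ideal.span {(xQ F (p ^ k) - 1) ^ t}) :
    t ≤ s := by
  haveI : Fact p.Prime := ⟨hp⟩
  by_contra hlt
  push_neg at hlt
  have hsn : s < p ^ k := lt_of_lt_of_le hlt ht
  rw [Ideal.mem_span_singleton] at h
  obtain ⟨c, hc⟩ := h
  obtain ⟨Cp, rfl⟩ := Ideal.Quotient.mk_surjective c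
  have hxq : Ideal.Quotient.mk (Ideal.span ({X ^ p ^ k - 1} : Set (Polynomial F)))
      ((X : Polynomial F) - 1) = xQ F (p ^ k) - 1 := by
    rw [map_sub, map_one, xQ]
  rw [← hxq, ← map_pow, ← map_pow, ← map_mul, Ideal.Quotient.eq,
    Ideal.mem_span_singleton] at hc
  obtain ⟨d, hd⟩ := hc
  have hXn : (X : Polynomial F) ^ p ^ k - 1 = ((X : Polynomial F) - 1) ^ p ^ k := by
    rw [sub_pow_char_pow, one_pow]
  rw [hXn] at hd
  have e1 : ((X : Polynomial F) - 1) ^ t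
      = ((X : Polynomial F) - 1) ^ (s + 1) * ((X : Polynomial F) - 1) ^ (t - s - 1) := by
    rw [← pow_add]; congr 1; omega
  have e2 : ((X : Polynomial F) - 1) ^ p ^ k
      = ((X : Polynomial F) - 1) ^ (s + 1) * ((X : Polynomial F) - 1) ^ (p ^ k - s - 1) := by
    rw [← pow_add]; congr 1; omega
  have hkey : ((X : Polynomial F) - 1) ^ s * (1 : Polynomial F)
      = ((X : Polynomial F) - 1) ^ s * (((X : Polynomial F) - 1)
        * (((X : Polynomial F) - 1) ^ (t - s - 1) * Cp
          + ((X : Polynomial F) - 1) ^ (p ^ k - s - 1) * d)) := by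
    linear_combination hd + Cp * e1 + d * e2
  have hX1 : (X : Polynomial F) - 1 ≠ 0 := by
    simpa using X_sub_C_ne_zero (1 : F)
  have hcancel := mul_left_cancel₀ (pow_ne_zero s hX1) hkey
  have := congrArg (eval (1 : F)) hcancel
  simp at this

end MyAux

/-- the five elements `u³(x−1)^{r₁}`, `u³(x−1)^{n−r₁+k₄}`, `u³(x−1)^{r₂}`,
`u³(x−1)^{n−k₄+k₅}`, `u³(x−1)^{n−r₂+k₆}` lie in `C = ⟨g₁, g₂⟩`, and
`t₃ ≤ min{r₂, n−r₁+k₄, n−k₄+k₅, n−r₂+k₆}`. -/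
theorem stmt_10 (p m k : ℕ) (hp : Nat.Prime p) (hm : 1 ≤ m) (hk : 1 ≤ k)
    (F : Type) [Field F] [Fintype F] (hF : Fintype.card F = p ^ m)
    (r₁ r₂ k₄ k₅ k₆ : ℕ) (hr₂₁ : r₂ ≤ r₁) (hr₁ : r₁ < p ^ k)
    (hk₄ : k₄ < r₂) (hk₅ : k₅ < r₂) (hk₆ : k₆ < r₂)
    (p₄ p₅ p₆ : Sq F (p ^ k))
    (hp₄ : IsUnitLift F (p ^ k) p₄) (hp₅ : IsUnitLift F (p ^ k) p₅)
    (hp₆ : IsUnitLift F (p ^ k) p₆)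
    (C : Ideal (Sq F (p ^ k)))
    (hC : C = Ideal.span
      { uS F (p ^ k) * (xS F (p ^ k) - 1) ^ r₁
          + uS F (p ^ k) ^ 2 * (xS F (p ^ k) - 1) ^ k₄ * p₄
          + uS F (p ^ k) ^ 3 * (xS F (p ^ k) - 1) ^ k₅ * p₅,
        uS F (p ^ k) ^ 2 * (xS F (p ^ k) - 1) ^ r₂
          + uS F (p ^ k) ^ 3 * (xS F (p ^ k) - 1) ^ k₆ * p₆ }) :
    uS F (p ^ k) ^ 3 * (xS F (p ^ k) - 1) ^ r₁ ∈ C ∧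
    uS F (p ^ k) ^ 3 * (xS F (p ^ k) - 1) ^ (p ^ k - r₁ + k₄) ∈ C ∧
    uS F (p ^ k) ^ 3 * (xS F (p ^ k) - 1) ^ r₂ ∈ C ∧
    uS F (p ^ k) ^ 3 * (xS F (p ^ k) - 1) ^ (p ^ k - k₄ + k₅) ∈ C ∧
    uS F (p ^ k) ^ 3 * (xS F (p ^ k) - 1) ^ (p ^ k - r₂ + k₆) ∈ C ∧
    (∀ t₃ : ℕ, HasTorDeg F (p ^ k) 3 C t₃ →
      t₃ ≤ min r₂ (min (p ^ k - r₁ + k₄) (min (p ^ k - k₄ + k₅) (p ^ k - r₂ + k₆)))) := by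
  haveI : Fact p.Prime := ⟨hp⟩
  haveI : CharP F p := my_charF F p m hp hm hF
  obtain ⟨q₄, hq₄, rfl⟩ := hp₄
  obtain ⟨q₅, hq₅, rfl⟩ := hp₅
  obtain ⟨q₆, hq₆, rfl⟩ := hp₆
  obtain ⟨w₄, rfl⟩ := hq₄
  obtain ⟨w₅, rfl⟩ := hq₅
  obtain ⟨w₆, rfl⟩ := hq₆
  have hv₄ : liftQS F (p ^ k) ((w₄⁻¹ : (Qq F (p ^ k))ˣ) : Qq F (p ^ k))
      * liftQS F (p ^ k) (w₄ : Qq F (p ^ k)) = 1 := by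
    rw [← map_mul, Units.inv_mul, map_one]
  have hv₅ : liftQS F (p ^ k) ((w₅⁻¹ : (Qq F (p ^ k))ˣ) : Qq F (p ^ k))
      * liftQS F (p ^ k) (w₅ : Qq F (p ^ k)) = 1 := by
    rw [← map_mul, Units.inv_mul, map_one]
  have hv₆ : liftQS F (p ^ k) ((w₆⁻¹ : (Qq F (p ^ k))ˣ) : Qq F (p ^ k))
      * liftQS F (p ^ k) (w₆ : Qq F (p ^ k)) = 1 := by
    rw [← map_mul, Units.inv_mul, map_one]
  letI : CommRing (Sq F (p ^ k)) :=
    @Ideal.Quotient.commRing (Polynomial (Rq F)) _ (Ideal.span {X ^ (p ^ k) - 1})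
  obtain ⟨m₁, m₂, m₃, m₄, m₅⟩ :=
    my_mems (uS F (p ^ k)) (xS F (p ^ k) - 1) _ _ _ _ _ _
      (p ^ k) r₁ r₂ k₄ k₅ k₆ hr₂₁ hr₁ hk₄ hk₅ hk₆
      (my_uS_pow_four F (p ^ k)) (my_z_pow F p k hp) hv₄ hv₅ hv₆ C hC
  refine ⟨m₁, m₂, m₃, m₄, m₅, ?_⟩
  rintro t₃ ⟨ht₃n, hTor⟩
  have key : ∀ s : ℕ, uS F (p ^ k) ^ 3 * (xS F (p ^ k) - 1) ^ s ∈ C → t₃ ≤ s := by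
    intro s hs
    have hmem : ((xQ F (p ^ k) - 1) ^ s) ∈ TorSet F (p ^ k) 3 C := by
      refine ⟨(xS F (p ^ k) - 1) ^ s, hs, ?_⟩
      rw [map_pow, map_sub, map_one, my_mu_x]
    rw [hTor, SetLike.mem_coe] at hmem
    exact my_key F p k hp s t₃ ht₃n hmem
  exact le_min (key r₂ m₃) (le_min (key _ m₂) (le_min (key _ m₄) (key _ m₅)))

end
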